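/- arXiv:2211.14828 — 5 statements merged into one kernel-verified Lean document; each statement's English description precedes it below -/
import Mathlib

section
/- (Theorem 1 of the paper.) Let X ∈ ℝ^{n×d}, let Q ∈ ℝ^{n×s} have orthonormal columns (QᵀQ = I_s), and let k be a natural number. Suppose Ŷ ∈ ℝ^{s×d} is a best rank-k approximation of QᵀX, i.e. rank(Ŷ) ≤ k and ‖QᵀX − Ŷ‖_F ≤ ‖QᵀX − Z‖_F for every Z ∈ ℝ^{s×d} with rank(Z) ≤ k. Then for every Z ∈ ℝ^{s×d} with rank(Z) ≤ k, ‖X − QŶ‖_F ≤ ‖X − QZ‖_F; that is, QŶ is the quasi-optimal rank-k approximation of X within the subspace spanned by Q. -/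
open Matrix

/-- Frobenius norm of a real matrix: `‖A‖_F = sqrt (∑ i j, A i j ^ 2)`. -/
noncomputable def frobNorm {m n : Type*} [Fintype m] [Fintype n]
    (A : Matrix m n ℝ) : ℝ :=
  Real.sqrt (∑ i, ∑ j, (A i j) ^ 2)

private lemma fsq_eq_trace {m n : Type*} [Fintype m] [Fintype n]
    (A : Matrix m n ℝ) : (∑ i, ∑ j, (A i j) ^ 2) = (Aᵀ * A).trace := by
  simp only [trace, diag, mul_apply, transpose_apply, sq]
  rw [Finset.sum_comm]

private lemma fsq_nonneg {m n : Type*} [Fintype m] [Fintype n]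
    (A : Matrix m n ℝ) : 0 ≤ ∑ i, ∑ j, (A i j) ^ 2 :=
  Finset.sum_nonneg fun _ _ => Finset.sum_nonneg fun _ _ => sq_nonneg _

/-- Theorem 1 of the paper: if `Q` has orthonormal columns and `Ŷ` is a best rank-`k`
approximation of `Qᵀ * X`, then `Q * Ŷ` is the quasi-optimal rank-`k` approximation of `X`
within the subspace spanned by `Q`. -/
theorem frob_quasi_optimal_sketched_LRA {n d s : ℕ} (k : ℕ)
    (X : Matrix (Fin n) (Fin d) ℝ) (Q : Matrix (Fin n) (Fin s) ℝ)
    (hQ : Qᵀ * Q = 1)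
    (Yhat : Matrix (Fin s) (Fin d) ℝ)
    (hYrank : Yhat.rank ≤ k)
    (hYbest : ∀ Z : Matrix (Fin s) (Fin d) ℝ, Z.rank ≤ k →
      frobNorm (Qᵀ * X - Yhat) ≤ frobNorm (Qᵀ * X - Z)) :
    ∀ Z : Matrix (Fin s) (Fin d) ℝ, Z.rank ≤ k →
      frobNorm (X - Q * Yhat) ≤ frobNorm (X - Q * Z) := by
  intro Z hZ
  -- Pythagorean decomposition of the squared Frobenius norm
  have pyth : ∀ Y : Matrix (Fin s) (Fin d) ℝ,
      (∑ i, ∑ j, ((X - Q * Y) i j) ^ 2)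
        = (∑ i, ∑ j, ((X - Q * (Qᵀ * X)) i j) ^ 2)
          + (∑ i, ∑ j, ((Qᵀ * X - Y) i j) ^ 2) := by
    intro Y
    rw [fsq_eq_trace, fsq_eq_trace, fsq_eq_trace]
    have hdecomp : X - Q * Y = (X - Q * (Qᵀ * X)) + Q * (Qᵀ * X - Y) := by
      rw [Matrix.mul_sub]
      abel
    rw [hdecomp]
    set E := X - Q * (Qᵀ * X) with hE
    set C := Qᵀ * X - Y with hC
    have hQE : Qᵀ * E = 0 := by
      rw [hE, Matrix.mul_sub, ← Matrix.mul_assoc, ← Matrix.mul_assoc, hQ,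
        Matrix.one_mul, sub_self]
    have hcross : Eᵀ * (Q * C) = 0 := by
      rw [← Matrix.mul_assoc]
      have : Eᵀ * Q = (Qᵀ * E)ᵀ := by rw [transpose_mul, transpose_transpose]
      rw [this, hQE, transpose_zero, Matrix.zero_mul]
    have hcross' : (Q * C)ᵀ * E = 0 := by
      have := congrArg transpose hcross
      simpa using this
    have hQC : (Q * C)ᵀ * (Q * C) = Cᵀ * C := by
      rw [transpose_mul, Matrix.mul_assoc, ← Matrix.mul_assoc Qᵀ, hQ,
        Matrix.one_mul]
    rw [transpose_add, Matrix.add_mul, Matrix.mul_add, Matrix.mul_add,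
      hcross, hcross', hQC]
    simp [trace_add]
  -- conclude
  unfold frobNorm at *
  apply Real.sqrt_le_sqrt
  rw [pyth Yhat, pyth Z]
  have hbest := hYbest Z hZ
  have h2 : (∑ i, ∑ j, ((Qᵀ * X - Yhat) i j) ^ 2)
      ≤ (∑ i, ∑ j, ((Qᵀ * X - Z) i j) ^ 2) := by
    exact (Real.sqrt_le_sqrt_iff (y := ∑ i, ∑ j, ((Qᵀ * X - Z) i j) ^ 2)
      (fsq_nonneg (Qᵀ * X - Z))).mp hbest
  linarith
end

section
/- (Eckart–Young, Lemma 1 of the paper, projection form.) Let A ∈ ℝ^{n×d}, and let u₁, …, uₙ ∈ ℝⁿ be an orthonormal eigenbasis of the symmetric matrix AAᵀ with corresponding eigenvalues λ₁ ≥ λ₂ ≥ ⋯ ≥ λₙ arranged in non-increasing order. For k ≤ n let U_k ∈ ℝ^{n×k} be the matrix whose columns are u₁, …, u_k. Then for every matrix Z ∈ ℝ^{n×d} with rank(Z) ≤ k, ‖A − U_k U_kᵀ A‖_F ≤ ‖A − Z‖_F; that is, projecting A onto the span of its top-k left singular vectors gives an optimal rank-k approximation in Frobenius norm. -/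
open Matrix
open Finset

lemma euclid_sum_apply {n m : ℕ} (f : Fin m → EuclideanSpace ℝ (Fin n)) (i : Fin n) :
    (∑ l, f l) i = ∑ l, f l i :=
  by rw [WithLp.ofLp_sum]; exact Finset.sum_apply i Finset.univ fun l => f l

lemma exists_orthonormal_span {n d k : ℕ} (Z : Matrix (Fin n) (Fin d) ℝ) (hZ : Z.rank ≤ k) :
    ∃ (m : ℕ), m ≤ k ∧ ∃ (v : Fin m → (Fin n → ℝ)),
      (∀ l l' : Fin m, ∑ p, v l p * v l' p = if l = l' then 1 else 0) ∧
      (∀ j : Fin d, ∃ b : Fin m → ℝ, ∀ i, Z i j = ∑ l, b l * v l i) := by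
  classical
  set V : Submodule ℝ (EuclideanSpace ℝ (Fin n)) := (LinearMap.range Z.mulVecLin).map (EuclideanSpace.equiv (Fin n) ℝ).symm.toLinearEquiv.toLinearMap with hV
  haveI : FiniteDimensional ℝ V := FiniteDimensional.finiteDimensional_submodule V
  refine ⟨Module.finrank ℝ V, ?_, ?_⟩
  · exact le_trans (le_of_eq (LinearEquiv.finrank_map_eq _ _)) hZ
  · let b := stdOrthonormalBasis ℝ V
    refine ⟨fun l => (b l : EuclideanSpace ℝ (Fin n)), ?_, ?_⟩
    · intro l l'
      have h := b.orthonormal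
      rw [orthonormal_iff_ite] at h
      have h2 := h l l'
      rw [Submodule.coe_inner] at h2
      rw [← h2]
      simp [PiLp.inner_apply, RCLike.inner_apply]
      exact Finset.sum_congr rfl fun _ _ => mul_comm _ _
    · intro j
      have hmem : WithLp.toLp 2 (fun i => Z i j) ∈ V := by
        refine ⟨fun i => Z i j, ⟨Pi.single j 1, ?_⟩, rfl⟩
        show Z *ᵥ Pi.single j 1 = fun i => Z i j
        rw [Matrix.mulVec_single]
        simp
        rfl
      set x : V := ⟨WithLp.toLp 2 (fun i => Z i j), hmem⟩ with hx
      refine ⟨fun l => b.repr x l, ?_⟩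
      intro i
      have h1 := b.sum_repr x
      have hcoe : ((∑ l, b.repr x l • b l : V) : EuclideanSpace ℝ (Fin n)) = (x : EuclideanSpace ℝ (Fin n)) := by
        rw [h1]
      have hcoe2 : (∑ l, b.repr x l • (b l : EuclideanSpace ℝ (Fin n))) = (x : EuclideanSpace ℝ (Fin n)) := by
        rw [← hcoe]
        push_cast
        rfl
      have hZij : Z i j = (x : EuclideanSpace ℝ (Fin n)) i := rfl
      rw [hZij, ← hcoe2, euclid_sum_apply]
      rfl



lemma EY_gram {m N : ℕ} (v : Fin m → Fin N → ℝ)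
    (hv : ∀ l l' : Fin m, ∑ p, v l p * v l' p = if l = l' then 1 else 0)
    (b c : Fin m → ℝ) :
    ∑ p, (∑ l, b l * v l p) * (∑ l, c l * v l p) = ∑ l, b l * c l := by
  classical
  calc ∑ p, (∑ l, b l * v l p) * (∑ l, c l * v l p)
      = ∑ p, ∑ l, ∑ l', (b l * c l') * (v l p * v l' p) := by
        refine Finset.sum_congr rfl fun p _ => ?_
        rw [Finset.sum_mul_sum]
        exact Finset.sum_congr rfl fun l _ => Finset.sum_congr rfl fun l' _ => by ring
    _ = ∑ l, ∑ p, ∑ l', (b l * c l') * (v l p * v l' p) := Finset.sum_comm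
    _ = ∑ l, ∑ l', ∑ p, (b l * c l') * (v l p * v l' p) :=
        Finset.sum_congr rfl fun l _ => Finset.sum_comm
    _ = ∑ l, ∑ l', (b l * c l') * ∑ p, v l p * v l' p := by
        refine Finset.sum_congr rfl fun l _ => Finset.sum_congr rfl fun l' _ => ?_
        rw [Finset.mul_sum]
    _ = ∑ l, b l * c l := by
        simp [hv, mul_ite]

lemma EY_cross {m N : ℕ} (v : Fin m → Fin N → ℝ) (a : Fin N → ℝ) (b : Fin m → ℝ) :
    ∑ p, a p * (∑ l, b l * v l p) = ∑ l, b l * (∑ p, v l p * a p) := by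
  calc ∑ p, a p * (∑ l, b l * v l p)
      = ∑ p, ∑ l, a p * (b l * v l p) := by
        exact Finset.sum_congr rfl fun p _ => Finset.mul_sum _ _ _
    _ = ∑ l, ∑ p, a p * (b l * v l p) := Finset.sum_comm
    _ = ∑ l, b l * (∑ p, v l p * a p) := by
        refine Finset.sum_congr rfl fun l _ => ?_
        rw [Finset.mul_sum]
        exact Finset.sum_congr rfl fun p _ => by ring

lemma EY_expand {m N : ℕ} (v : Fin m → Fin N → ℝ)
    (hv : ∀ l l' : Fin m, ∑ p, v l p * v l' p = if l = l' then 1 else 0)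
    (a : Fin N → ℝ) (b : Fin m → ℝ) :
    ∑ p, (a p - ∑ l, b l * v l p)^2
      = ∑ p, a p ^ 2 - 2 * ∑ l, b l * (∑ p, v l p * a p) + ∑ l, b l * b l := by
  have h1 : ∀ p ∈ Finset.univ, (a p - ∑ l, b l * v l p)^2
      = a p ^ 2 - 2*(a p * ∑ l, b l * v l p)
        + (∑ l, b l * v l p) * (∑ l, b l * v l p) := fun p _ => by ring
  rw [Finset.sum_congr rfl h1, Finset.sum_add_distrib, Finset.sum_sub_distrib,
    ← Finset.mul_sum, EY_cross v a b, EY_gram v hv b b]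

lemma EY_proj_lower {m N : ℕ} (v : Fin m → Fin N → ℝ)
    (hv : ∀ l l' : Fin m, ∑ p, v l p * v l' p = if l = l' then 1 else 0)
    (a : Fin N → ℝ) (b : Fin m → ℝ) :
    ∑ p, a p ^ 2 - ∑ l, (∑ p, v l p * a p)^2 ≤ ∑ p, (a p - ∑ l, b l * v l p)^2 := by
  rw [EY_expand v hv a b]
  have h0 : (0:ℝ) ≤ ∑ l, (b l - (∑ p, v l p * a p))^2 :=
    Finset.sum_nonneg fun l _ => sq_nonneg _
  have h1 : ∀ l ∈ Finset.univ, (b l - (∑ p, v l p * a p))^2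
      = b l * b l - 2*(b l * (∑ p, v l p * a p)) + (∑ p, v l p * a p)^2 :=
    fun l _ => by ring
  rw [Finset.sum_congr rfl h1, Finset.sum_add_distrib, Finset.sum_sub_distrib,
    ← Finset.mul_sum] at h0
  linarith

lemma EY_bessel {m N : ℕ} (v : Fin m → Fin N → ℝ)
    (hv : ∀ l l' : Fin m, ∑ p, v l p * v l' p = if l = l' then 1 else 0)
    (x : Fin N → ℝ) (hx : ∑ p, x p * x p = 1) :
    ∑ l, (∑ p, v l p * x p)^2 ≤ 1 := by
  have h0 : (0:ℝ) ≤ ∑ p, (x p - ∑ l, (∑ q, v l q * x q) * v l p)^2 :=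
    Finset.sum_nonneg fun p _ => sq_nonneg _
  have h1 := EY_expand v hv x (fun l => ∑ q, v l q * x q)
  have hx2 : ∑ p, x p ^ 2 = 1 := by
    rw [← hx]; exact Finset.sum_congr rfl fun p _ => sq (x p) ▸ (pow_two (x p))
  have h2 : ∑ l, (∑ q, v l q * x q) * (∑ p, v l p * x p)
      = ∑ l, (∑ p, v l p * x p)^2 :=
    Finset.sum_congr rfl fun l _ => (pow_two _).symm
  rw [h1, hx2, h2] at h0
  linarith

lemma EY_parseval {n : ℕ} (u : Fin n → Fin n → ℝ)
    (hcol : ∀ p q : Fin n, ∑ i, u i p * u i q = if p = q then 1 else 0)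
    (x : Fin n → ℝ) :
    ∑ i, (∑ p, u i p * x p)^2 = ∑ p, x p ^ 2 := by
  have h := EY_gram (v := fun q => fun i => u i q) hcol x x
  calc ∑ i, (∑ p, u i p * x p)^2
      = ∑ i, (∑ q, x q * u i q) * (∑ q, x q * u i q) := by
        refine Finset.sum_congr rfl fun i _ => ?_
        rw [pow_two]
        congr 1 <;> exact Finset.sum_congr rfl fun q _ => by ring
    _ = ∑ q, x q * x q := h
    _ = ∑ p, x p ^ 2 := Finset.sum_congr rfl fun p _ => (pow_two _).symm

lemma EY_expand_basis {n : ℕ} (u : Fin n → Fin n → ℝ)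
    (hcol : ∀ p q : Fin n, ∑ i, u i p * u i q = if p = q then 1 else 0)
    (x : Fin n → ℝ) (p : Fin n) :
    x p = ∑ i, (∑ q, u i q * x q) * u i p := by
  classical
  calc x p = ∑ q, x q * (if q = p then 1 else 0) := by simp
    _ = ∑ q, x q * ∑ i, u i q * u i p := by
        exact Finset.sum_congr rfl fun q _ => by rw [hcol q p]
    _ = ∑ q, ∑ i, x q * (u i q * u i p) := by
        exact Finset.sum_congr rfl fun q _ => Finset.mul_sum _ _ _
    _ = ∑ i, ∑ q, x q * (u i q * u i p) := Finset.sum_comm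
    _ = ∑ i, (∑ q, u i q * x q) * u i p := by
        refine Finset.sum_congr rfl fun i _ => ?_
        rw [Finset.sum_mul]
        exact Finset.sum_congr rfl fun q _ => by ring


lemma EY_reindex {n k : ℕ} (hk : k ≤ n) (f : Fin n → ℝ) :
    ∑ l : Fin k, f (Fin.castLE hk l)
      = ∑ i ∈ Finset.univ.filter (fun i : Fin n => (i : ℕ) < k), f i := by
  classical
  refine Finset.sum_bij' (fun l _ => Fin.castLE hk l)
    (fun i hi => ⟨(i : ℕ), by simpa using (Finset.mem_filter.mp hi).2⟩) ?_ ?_ ?_ ?_ ?_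
  · intro l _
    simp [Finset.mem_filter, l.isLt]
  · intro i hi
    simp
  · intro l _
    ext; simp
  · intro i hi
    ext; simp
  · intro l _
    rfl

lemma EY_card {n k : ℕ} (hk : k ≤ n) :
    ((Finset.univ.filter (fun i : Fin n => (i : ℕ) < k)).card : ℝ) = k := by
  have h := EY_reindex hk (fun _ => (1:ℝ))
  simp only [Finset.sum_const, nsmul_eq_mul, mul_one] at h
  rw [← h]
  simp

lemma EY_combinatorial {n k : ℕ} (hk : k ≤ n) (lam t : Fin n → ℝ)
    (hdecr : ∀ i j : Fin n, i ≤ j → lam j ≤ lam i) (hlam0 : ∀ i, 0 ≤ lam i)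
    (ht0 : ∀ i, 0 ≤ t i) (ht1 : ∀ i, t i ≤ 1) (htsum : ∑ i, t i ≤ (k : ℝ)) :
    ∑ i, lam i * t i ≤ ∑ i ∈ Finset.univ.filter (fun i : Fin n => (i : ℕ) < k), lam i := by
  classical
  set μ : ℝ := if h : k < n then lam ⟨k, h⟩ else 0 with hμ
  have hμ0 : 0 ≤ μ := by
    rw [hμ]; split_ifs
    · exact hlam0 _
    · exact le_refl 0
  have hlo : ∀ i : Fin n, (i : ℕ) < k → μ ≤ lam i := by
    intro i hi
    rw [hμ]; split_ifs with h
    · exact hdecr i ⟨k, h⟩ (by exact Fin.le_def.mpr (le_of_lt hi))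
    · exact hlam0 i
  have hhi : ∀ i : Fin n, ¬ (i : ℕ) < k → lam i ≤ μ := by
    intro i hi
    have hkn : k < n := lt_of_le_of_lt (le_of_not_gt hi) i.isLt
    rw [hμ, dif_pos hkn]
    exact hdecr ⟨k, hkn⟩ i (Fin.le_def.mpr (le_of_not_gt hi))
  set s := Finset.univ.filter (fun i : Fin n => (i : ℕ) < k) with hs
  have hsplit : ∑ i, lam i * t i
      = ∑ i ∈ s, lam i * t i + ∑ i ∈ sᶜ, lam i * t i :=
    (Finset.sum_add_sum_compl s _).symm
  have h1 : ∑ i ∈ s, lam i * t i ≤ ∑ i ∈ s, (lam i + (μ * t i - μ)) := by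
    refine Finset.sum_le_sum fun i hi => ?_
    have hik : (i : ℕ) < k := (Finset.mem_filter.mp hi).2
    nlinarith [hlo i hik, ht1 i, ht0 i]
  have h2 : ∑ i ∈ sᶜ, lam i * t i ≤ ∑ i ∈ sᶜ, μ * t i := by
    refine Finset.sum_le_sum fun i hi => ?_
    have hik : ¬ (i : ℕ) < k := by
      simpa [hs] using (Finset.mem_compl.mp hi)
    nlinarith [hhi i hik, ht0 i]
  have h3 : ∑ i ∈ s, (lam i + (μ * t i - μ))
      = ∑ i ∈ s, lam i + (μ * ∑ i ∈ s, t i - (s.card : ℝ) * μ) := by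
    rw [Finset.sum_add_distrib, Finset.sum_sub_distrib, ← Finset.mul_sum,
      Finset.sum_const, nsmul_eq_mul]
  have hcard : (s.card : ℝ) = k := EY_card hk
  have h4 : μ * ∑ i ∈ s, t i + μ * ∑ i ∈ sᶜ, t i = μ * ∑ i, t i := by
    rw [← mul_add, Finset.sum_add_sum_compl]
  have h5 : μ * ∑ i, t i ≤ μ * k := mul_le_mul_of_nonneg_left htsum hμ0
  have h6 : ∑ i ∈ sᶜ, μ * t i = μ * ∑ i ∈ sᶜ, t i := (Finset.mul_sum _ _ _).symm
  calc ∑ i, lam i * t i ≤ ∑ i ∈ s, (lam i + (μ * t i - μ)) + ∑ i ∈ sᶜ, μ * t i := by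
        rw [hsplit]; exact add_le_add h1 h2
    _ = ∑ i ∈ s, lam i + (μ * ∑ i, t i - μ * k) := by
        rw [h3, h6, hcard]; linarith [h4]
    _ ≤ ∑ i ∈ s, lam i := by linarith [h5]

lemma EY_M1 {n d : ℕ} (A : Matrix (Fin n) (Fin d) ℝ) (w : Fin n → ℝ) :
    ∑ j, (∑ p, w p * A p j)^2 = w ⬝ᵥ ((A * Aᵀ) *ᵥ w) := by
  have h1 : ∀ j, (w ᵥ* A) j = ∑ p, w p * A p j := fun j => rfl
  calc ∑ j, (∑ p, w p * A p j)^2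
      = (w ᵥ* A) ⬝ᵥ (w ᵥ* A) := by
        simp only [dotProduct, h1, pow_two]
    _ = (w ᵥ* A) ⬝ᵥ (Aᵀ *ᵥ w) := by rw [Matrix.mulVec_transpose]
    _ = w ⬝ᵥ ((A * Aᵀ) *ᵥ w) := by
        rw [Matrix.dotProduct_mulVec, Matrix.dotProduct_mulVec, Matrix.vecMul_vecMul]

lemma EY_M2 {n : ℕ} (M : Matrix (Fin n) (Fin n) ℝ) (u : Fin n → Fin n → ℝ) (lam : Fin n → ℝ)
    (hcol : ∀ p q : Fin n, ∑ i, u i p * u i q = if p = q then 1 else 0)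
    (heig : ∀ i, M *ᵥ u i = lam i • u i) (w : Fin n → ℝ) :
    w ⬝ᵥ (M *ᵥ w) = ∑ i, lam i * (∑ q, u i q * w q)^2 := by
  have hm : ∀ p, (M *ᵥ w) p = ∑ i, (∑ q, u i q * w q) * (lam i * u i p) := by
    intro p
    calc (M *ᵥ w) p = ∑ q, M p q * w q := rfl
      _ = ∑ q, M p q * ∑ i, (∑ q', u i q' * w q') * u i q := by
          refine Finset.sum_congr rfl fun q _ => ?_
          rw [← EY_expand_basis u hcol w q]
      _ = ∑ q, ∑ i, (∑ q', u i q' * w q') * (M p q * u i q) := by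
          refine Finset.sum_congr rfl fun q _ => ?_
          rw [Finset.mul_sum]
          exact Finset.sum_congr rfl fun i _ => by ring
      _ = ∑ i, ∑ q, (∑ q', u i q' * w q') * (M p q * u i q) := Finset.sum_comm
      _ = ∑ i, (∑ q', u i q' * w q') * (M *ᵥ u i) p := by
          refine Finset.sum_congr rfl fun i _ => ?_
          rw [← Finset.mul_sum]
          rfl
      _ = ∑ i, (∑ q, u i q * w q) * (lam i * u i p) := by
          refine Finset.sum_congr rfl fun i _ => ?_
          rw [heig i]
          rfl
  calc w ⬝ᵥ (M *ᵥ w) = ∑ p, w p * ∑ i, (∑ q, u i q * w q) * (lam i * u i p) := by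
        refine Finset.sum_congr rfl fun p _ => ?_
        rw [hm p]
    _ = ∑ p, ∑ i, ((∑ q, u i q * w q) * lam i) * (u i p * w p) := by
        refine Finset.sum_congr rfl fun p _ => ?_
        rw [Finset.mul_sum]
        exact Finset.sum_congr rfl fun i _ => by ring
    _ = ∑ i, ∑ p, ((∑ q, u i q * w q) * lam i) * (u i p * w p) := Finset.sum_comm
    _ = ∑ i, ((∑ q, u i q * w q) * lam i) * ∑ p, u i p * w p := by
        refine Finset.sum_congr rfl fun i _ => ?_
        rw [Finset.mul_sum]
    _ = ∑ i, lam i * (∑ q, u i q * w q)^2 := by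
        refine Finset.sum_congr rfl fun i _ => ?_
        ring

/-- Eckart–Young theorem, projection form: projecting `A` onto the span of orthonormal
eigenvectors of `A * Aᵀ` for its `k` largest eigenvalues gives an optimal rank-`k`
approximation in Frobenius norm. -/
theorem eckart_young_projection {n d : ℕ}
    (A : Matrix (Fin n) (Fin d) ℝ)
    (u : Fin n → (Fin n → ℝ)) (lam : Fin n → ℝ)
    (h_orthonormal : ∀ i j : Fin n, dotProduct (u i) (u j) = if i = j then 1 else 0)
    (h_eigen : ∀ i : Fin n, (A * Aᵀ) *ᵥ u i = lam i • u i)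
    (h_decr : ∀ i j : Fin n, i ≤ j → lam j ≤ lam i)
    (k : ℕ) (hk : k ≤ n)
    (Uk : Matrix (Fin n) (Fin k) ℝ)
    (hUk : ∀ (i : Fin n) (j : Fin k), Uk i j = u (Fin.castLE hk j) i) :
    ∀ Z : Matrix (Fin n) (Fin d) ℝ, Z.rank ≤ k →
      frobNorm (A - Uk * Ukᵀ * A) ≤ frobNorm (A - Z) := by
  intro Z hZ
  classical
  obtain ⟨m, hm, v, hv, hspan⟩ := exists_orthonormal_span Z hZ
  -- column orthonormality of u
  have hQQt : (Matrix.of u) * (Matrix.of u)ᵀ = (1 : Matrix (Fin n) (Fin n) ℝ) := by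
    ext i j
    simp only [Matrix.mul_apply, Matrix.transpose_apply, Matrix.of_apply, Matrix.one_apply]
    simpa [dotProduct] using h_orthonormal i j
  have hQtQ := mul_eq_one_comm.mp hQQt
  have hcol : ∀ p q : Fin n, ∑ i, u i p * u i q = if p = q then 1 else 0 := by
    intro p q
    have h2 : ((Matrix.of u)ᵀ * (Matrix.of u)) p q = (1 : Matrix (Fin n) (Fin n) ℝ) p q := by
      rw [hQtQ]
    simpa [Matrix.mul_apply, Matrix.transpose_apply, Matrix.of_apply, Matrix.one_apply] using h2
  -- eigenvalues as row norms
  have hlam : ∀ i, ∑ j, (∑ p, u i p * A p j)^2 = lam i := by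
    intro i
    have h := h_orthonormal i i
    rw [if_pos rfl] at h
    rw [EY_M1 A (u i), h_eigen i, dotProduct_smul, h, smul_eq_mul, mul_one]
  have hlam0 : ∀ i, 0 ≤ lam i := fun i =>
    (hlam i) ▸ Finset.sum_nonneg fun j _ => sq_nonneg _
  -- truncated orthonormal family
  have hv' : ∀ l l' : Fin k,
      ∑ p, u (Fin.castLE hk l) p * u (Fin.castLE hk l') p = if l = l' then 1 else 0 := by
    intro l l'
    have h := h_orthonormal (Fin.castLE hk l) (Fin.castLE hk l')
    simp only [dotProduct] at h
    rw [h]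
    simp [Fin.castLE_inj]
  -- per-column identity for A - Uk Ukᵀ A
  have hPA : ∀ j, ∑ i, ((A - Uk*Ukᵀ*A) i j)^2
      = ∑ p, (A p j)^2 - ∑ l : Fin k, (∑ p, u (Fin.castLE hk l) p * A p j)^2 := by
    intro j
    have hentry : ∀ i ∈ Finset.univ, (A - Uk*Ukᵀ*A) i j
        = A i j - ∑ l : Fin k, (∑ p, u (Fin.castLE hk l) p * A p j) * u (Fin.castLE hk l) i := by
      intro i _
      have h1 : (Uk*Ukᵀ*A) i j = ∑ l : Fin k, Uk i l * ∑ p, Uk p l * A p j := by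
        rw [Matrix.mul_assoc, Matrix.mul_apply]
        refine Finset.sum_congr rfl fun l _ => ?_
        rw [Matrix.mul_apply]
        congr 1
      simp only [Matrix.sub_apply]
      rw [h1]
      congr 1
      refine Finset.sum_congr rfl fun l _ => ?_
      rw [hUk i l, Finset.sum_congr rfl fun p (_ : p ∈ Finset.univ) => by rw [hUk p l]]
      ring
    have hkey := EY_expand (fun l => u (Fin.castLE hk l)) hv' (fun p => A p j)
      (fun l => ∑ p, u (Fin.castLE hk l) p * A p j)
    beta_reduce at hkey
    have hsq0 : ∑ i, ((A - Uk*Ukᵀ*A) i j)^2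
        = ∑ i, (A i j - ∑ l : Fin k, (∑ p, u (Fin.castLE hk l) p * A p j) * u (Fin.castLE hk l) i)^2 :=
      Finset.sum_congr rfl fun i hi => by rw [hentry i hi]
    rw [hsq0, hkey]
    have hsq : ∑ l : Fin k, (∑ p, u (Fin.castLE hk l) p * A p j) * (∑ p, u (Fin.castLE hk l) p * A p j)
        = ∑ l : Fin k, (∑ p, u (Fin.castLE hk l) p * A p j)^2 :=
      Finset.sum_congr rfl fun l _ => (pow_two _).symm
    rw [hsq]
    ring
  -- total: Frobenius of A - P A
  have hParsevalA : ∑ j, ∑ p, (A p j)^2 = ∑ i, lam i := by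
    calc ∑ j, ∑ p, (A p j)^2
        = ∑ j, ∑ i, (∑ p, u i p * A p j)^2 :=
          Finset.sum_congr rfl fun j _ => (EY_parseval u hcol (fun p => A p j)).symm
      _ = ∑ i, ∑ j, (∑ p, u i p * A p j)^2 := Finset.sum_comm
      _ = ∑ i, lam i := Finset.sum_congr rfl fun i _ => hlam i
  have hsumPA : ∑ i, ∑ j, ((A - Uk*Ukᵀ*A) i j)^2
      = ∑ i, lam i - ∑ i ∈ Finset.univ.filter (fun i : Fin n => (i:ℕ) < k), lam i := by
    rw [Finset.sum_comm]
    calc ∑ j, ∑ i, ((A - Uk*Ukᵀ*A) i j)^2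
        = ∑ j, (∑ p, (A p j)^2 - ∑ l : Fin k, (∑ p, u (Fin.castLE hk l) p * A p j)^2) :=
          Finset.sum_congr rfl fun j _ => hPA j
      _ = ∑ j, ∑ p, (A p j)^2 - ∑ j, ∑ l : Fin k, (∑ p, u (Fin.castLE hk l) p * A p j)^2 :=
          Finset.sum_sub_distrib _ _
      _ = ∑ i, lam i - ∑ i ∈ Finset.univ.filter (fun i : Fin n => (i:ℕ) < k), lam i := by
          rw [hParsevalA]
          congr 1
          calc ∑ j, ∑ l : Fin k, (∑ p, u (Fin.castLE hk l) p * A p j)^2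
              = ∑ l : Fin k, ∑ j, (∑ p, u (Fin.castLE hk l) p * A p j)^2 := Finset.sum_comm
            _ = ∑ l : Fin k, lam (Fin.castLE hk l) :=
                Finset.sum_congr rfl fun l _ => hlam (Fin.castLE hk l)
            _ = ∑ i ∈ Finset.univ.filter (fun i : Fin n => (i:ℕ) < k), lam i :=
                EY_reindex hk lam
  -- Rayleigh for the v family
  have hRv : ∀ l : Fin m, ∑ j, (∑ p, v l p * A p j)^2
      = ∑ i, lam i * (∑ q, u i q * v l q)^2 := fun l => by
    rw [EY_M1 A (v l)]
    exact EY_M2 (A*Aᵀ) u lam hcol h_eigen (v l)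
  set t : Fin n → ℝ := fun i => ∑ l : Fin m, (∑ q, u i q * v l q)^2 with hts
  have ht0 : ∀ i, 0 ≤ t i := fun i => Finset.sum_nonneg fun l _ => sq_nonneg _
  have ht1 : ∀ i, t i ≤ 1 := by
    intro i
    have hx : ∑ p, u i p * u i p = 1 := by
      have h := h_orthonormal i i
      rw [if_pos rfl] at h
      simpa [dotProduct] using h
    have hb := EY_bessel v hv (u i) hx
    calc t i = ∑ l : Fin m, (∑ q, v l q * u i q)^2 :=
        Finset.sum_congr rfl fun l _ => by
          rw [Finset.sum_congr rfl fun q (_ : q ∈ Finset.univ) => mul_comm (u i q) (v l q)]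
      _ ≤ 1 := hb
  have htsum : ∑ i, t i ≤ (k : ℝ) := by
    have hone : ∀ l : Fin m, ∑ i, (∑ q, u i q * v l q)^2 = 1 := by
      intro l
      have h1 := hv l l
      rw [if_pos rfl] at h1
      calc ∑ i, (∑ q, u i q * v l q)^2 = ∑ p, (v l p)^2 := EY_parseval u hcol (v l)
        _ = ∑ p, v l p * v l p := Finset.sum_congr rfl fun p _ => pow_two _
        _ = 1 := h1
    calc ∑ i, t i = ∑ l : Fin m, ∑ i, (∑ q, u i q * v l q)^2 := Finset.sum_comm
      _ = ∑ l : Fin m, (1:ℝ) := Finset.sum_congr rfl fun l _ => hone l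
      _ = (m : ℝ) := by simp
      _ ≤ (k : ℝ) := by exact_mod_cast hm
  have hkey2 : ∑ l : Fin m, ∑ j, (∑ p, v l p * A p j)^2
      ≤ ∑ i ∈ Finset.univ.filter (fun i : Fin n => (i:ℕ) < k), lam i := by
    calc ∑ l : Fin m, ∑ j, (∑ p, v l p * A p j)^2
        = ∑ l : Fin m, ∑ i, lam i * (∑ q, u i q * v l q)^2 :=
          Finset.sum_congr rfl fun l _ => hRv l
      _ = ∑ i, ∑ l : Fin m, lam i * (∑ q, u i q * v l q)^2 := Finset.sum_comm
      _ = ∑ i, lam i * t i := Finset.sum_congr rfl fun i _ => (Finset.mul_sum _ _ _).symm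
      _ ≤ _ := EY_combinatorial hk lam t h_decr hlam0 ht0 ht1 htsum
  -- lower bound for A - Z
  have hZcol : ∀ j, ∑ p, (A p j)^2 - ∑ l : Fin m, (∑ p, v l p * A p j)^2
      ≤ ∑ i, ((A - Z) i j)^2 := by
    intro j
    obtain ⟨b, hb⟩ := hspan j
    have hentry : ∀ i ∈ Finset.univ, (A - Z) i j = A i j - ∑ l : Fin m, b l * v l i :=
      fun i _ => by rw [Matrix.sub_apply, hb i]
    have hsq2 : ∑ i, ((A - Z) i j)^2 = ∑ i, (A i j - ∑ l : Fin m, b l * v l i)^2 :=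
      Finset.sum_congr rfl fun i hi => by rw [hentry i hi]
    rw [hsq2]
    have h := EY_proj_lower v hv (fun p => A p j) b
    simpa using h
  have hZlower : ∑ i, lam i - ∑ i ∈ Finset.univ.filter (fun i : Fin n => (i:ℕ) < k), lam i
      ≤ ∑ i, ∑ j, ((A - Z) i j)^2 := by
    rw [Finset.sum_comm]
    have h1 : ∑ j, (∑ p, (A p j)^2 - ∑ l : Fin m, (∑ p, v l p * A p j)^2)
        ≤ ∑ j, ∑ i, ((A - Z) i j)^2 := Finset.sum_le_sum fun j _ => hZcol j
    have h2 : ∑ j, (∑ p, (A p j)^2 - ∑ l : Fin m, (∑ p, v l p * A p j)^2)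
        = ∑ i, lam i - ∑ l : Fin m, ∑ j, (∑ p, v l p * A p j)^2 := by
      rw [Finset.sum_sub_distrib, hParsevalA]
      congr 1
      exact Finset.sum_comm
    linarith [hkey2, h1, h2]
  have hfinal : ∑ i, ∑ j, ((A - Uk*Ukᵀ*A) i j)^2 ≤ ∑ i, ∑ j, ((A - Z) i j)^2 := by
    rw [hsumPA]
    exact hZlower
  simp only [frobNorm]
  exact Real.sqrt_le_sqrt hfinal
end

section
/- (Remark after Lemma 4 of the paper, Eq. (10), two-mode case.) Let X ∈ ℝ^{n×d}, and let P₁ ∈ ℝ^{n×n} and P₂ ∈ ℝ^{d×d} be orthogonal projection matrices (P₁ᵀ = P₁, P₁² = P₁, and P₂ᵀ = P₂, P₂² = P₂). Then ‖X − P₁ X P₂‖_F² ≤ ‖X − P₁ X‖_F² + ‖X − X P₂‖_F². -/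
open Matrix

lemma trace_aux {m n : Type*} [Fintype m] [Fintype n] (A : Matrix m n ℝ) :
    Matrix.trace (Aᵀ * A) = ∑ i, ∑ j, (A i j) ^ 2 := by
  simp only [Matrix.trace, Matrix.mul_apply, Matrix.diag, Matrix.transpose_apply, sq]
  rw [Finset.sum_comm]

lemma trace_nonneg_aux {m n : Type*} [Fintype m] [Fintype n] (A : Matrix m n ℝ) :
    0 ≤ Matrix.trace (Aᵀ * A) := by
  rw [trace_aux]
  positivity

lemma frob_sq {m n : Type*} [Fintype m] [Fintype n] (A : Matrix m n ℝ) :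
    frobNorm A ^ 2 = Matrix.trace (Aᵀ * A) := by
  rw [frobNorm, Real.sq_sqrt (by positivity), trace_aux]

/-- Pythagorean-type bound (Eq. (10) of the paper, two-mode case): the error of a
simultaneous two-sided orthogonal projection is at most the sum of the single-mode
projection errors. -/
theorem frob_two_mode_projection_bound {n d : ℕ}
    (X : Matrix (Fin n) (Fin d) ℝ)
    (P₁ : Matrix (Fin n) (Fin n) ℝ) (P₂ : Matrix (Fin d) (Fin d) ℝ)
    (hP₁sym : P₁ᵀ = P₁) (hP₁idem : P₁ * P₁ = P₁)
    (hP₂sym : P₂ᵀ = P₂) (hP₂idem : P₂ * P₂ = P₂) :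
    frobNorm (X - P₁ * X * P₂) ^ 2
      ≤ frobNorm (X - P₁ * X) ^ 2 + frobNorm (X - X * P₂) ^ 2 := by
  set B := X - P₁ * X with hB
  set C := X - X * P₂ with hC
  have hA : X - P₁ * X * P₂ = B + P₁ * C := by
    rw [hB, hC, Matrix.mul_sub, Matrix.mul_assoc]
    abel
  -- Bᵀ * P₁ = 0
  have hBP : Bᵀ * P₁ = 0 := by
    rw [hB, Matrix.transpose_sub, Matrix.transpose_mul, hP₁sym, Matrix.sub_mul,
      Matrix.mul_assoc, hP₁idem, sub_self]
  -- cross term vanishes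
  have hcross : Matrix.trace (Bᵀ * (P₁ * C)) = 0 := by
    rw [← Matrix.mul_assoc, hBP, Matrix.zero_mul, Matrix.trace_zero]
  have hcross' : Matrix.trace ((P₁ * C)ᵀ * B) = 0 := by
    have h : (Bᵀ * (P₁ * C))ᵀ = (P₁ * C)ᵀ * B := by
      rw [Matrix.transpose_mul, Matrix.transpose_transpose]
    rw [← h, Matrix.trace_transpose, hcross]
  -- (P₁C)ᵀ(P₁C) = Cᵀ P₁ C
  have hM : (P₁ * C)ᵀ * (P₁ * C) = Cᵀ * (P₁ * C) := by
    rw [Matrix.transpose_mul, hP₁sym, Matrix.mul_assoc, ← Matrix.mul_assoc P₁, hP₁idem]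
  -- trace(Cᵀ P₁ C) ≤ trace(Cᵀ C)
  have hle : Matrix.trace (Cᵀ * (P₁ * C)) ≤ Matrix.trace (Cᵀ * C) := by
    have key : ((1 - P₁) * C)ᵀ * ((1 - P₁) * C) = Cᵀ * C - Cᵀ * (P₁ * C) := by
      have h1 : (1 - P₁ : Matrix (Fin n) (Fin n) ℝ)ᵀ = 1 - P₁ := by
        rw [Matrix.transpose_sub, Matrix.transpose_one, hP₁sym]
      have h2 : (1 - P₁) * (1 - P₁) = 1 - P₁ := by
        rw [Matrix.sub_mul, Matrix.one_mul, Matrix.mul_sub, Matrix.mul_one, hP₁idem]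
        abel
      rw [Matrix.transpose_mul, h1, Matrix.mul_assoc, ← Matrix.mul_assoc (1 - P₁), h2]
      rw [Matrix.sub_mul, Matrix.one_mul, Matrix.mul_sub]
    have := trace_nonneg_aux ((1 - P₁) * C)
    rw [key, Matrix.trace_sub] at this
    linarith
  rw [hA, frob_sq, frob_sq, frob_sq, Matrix.transpose_add, Matrix.add_mul,
    Matrix.mul_add, Matrix.mul_add, Matrix.trace_add, Matrix.trace_add,
    Matrix.trace_add, hcross, hcross', hM]
  linarith
end

section
/- (Remark after Lemma 4 of the paper, Eq. (10), three-mode case via mode-1 matricization.) Let X ∈ ℝ^{I₁ × (I₂·I₃)} (the mode-1 matricization of a third-order tensor of size I₁ × I₂ × I₃), and let P₁ ∈ ℝ^{I₁×I₁}, P₂ ∈ ℝ^{I₂×I₂}, P₃ ∈ ℝ^{I₃×I₃} be orthogonal projection matrices (Pᵢᵀ = Pᵢ and Pᵢ² = Pᵢ for i = 1,2,3). Denoting by ⊗ the Kronecker product and by I_m the m×m identity matrix, one has ‖X − P₁ X (P₂ ⊗ P₃)‖_F² ≤ ‖X − P₁ X‖_F² + ‖X − X (P₂ ⊗ I_{I₃})‖_F²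 + ‖X − X (I_{I₂} ⊗ P₃)‖_F². -/
open Matrix Kronecker

section Aux

variable {m n : Type*} [Fintype m] [Fintype n]

lemma sumSq_eq_trace (A : Matrix m n ℝ) :
    (∑ i, ∑ j, (A i j) ^ 2) = Matrix.trace (Aᵀ * A) := by
  rw [Matrix.trace, Finset.sum_comm]
  simp [Matrix.mul_apply, Matrix.diag, Matrix.transpose_apply, sq]

lemma frobNorm_sq (A : Matrix m n ℝ) :
    frobNorm A ^ 2 = Matrix.trace (Aᵀ * A) := by
  rw [frobNorm, Real.sq_sqrt, sumSq_eq_trace]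
  exact Finset.sum_nonneg fun i _ => Finset.sum_nonneg fun j _ => sq_nonneg _

lemma trace_self_nonneg (A : Matrix m n ℝ) : 0 ≤ Matrix.trace (Aᵀ * A) := by
  rw [← sumSq_eq_trace]
  exact Finset.sum_nonneg fun i _ => Finset.sum_nonneg fun j _ => sq_nonneg _

lemma pyth (A B : Matrix m n ℝ) (h : Matrix.trace (Aᵀ * B) = 0) :
    Matrix.trace ((A + B)ᵀ * (A + B))
      = Matrix.trace (Aᵀ * A) + Matrix.trace (Bᵀ * B) := by
  have h2 : Matrix.trace (Bᵀ * A) = 0 := by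
    have := Matrix.trace_transpose (Aᵀ * B)
    rw [Matrix.transpose_mul, Matrix.transpose_transpose] at this
    rw [this, h]
  simp only [Matrix.transpose_add, Matrix.add_mul, Matrix.mul_add, Matrix.trace_add, h, h2]
  ring

lemma contract_right [DecidableEq n] (M : Matrix m n ℝ) (P : Matrix n n ℝ)
    (hsym : Pᵀ = P) (hidem : P * P = P) :
    Matrix.trace ((M * P)ᵀ * (M * P)) ≤ Matrix.trace (Mᵀ * M) := by
  have hdecomp : M = M * P + M * (1 - P) := by
    rw [Matrix.mul_sub, Matrix.mul_one]; abel
  have hortho : Matrix.trace ((M * P)ᵀ * (M * (1 - P))) = 0 := by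
    rw [Matrix.transpose_mul, hsym]
    have h1 : P * Mᵀ * (M * (1 - P)) = P * (Mᵀ * (M * (1 - P))) := by
      simp only [Matrix.mul_assoc]
    rw [h1, Matrix.trace_mul_comm]
    have h2 : Mᵀ * (M * (1 - P)) * P = Mᵀ * M * ((1 - P) * P) := by
      simp only [Matrix.mul_assoc]
    have hz : ((1 : Matrix n n ℝ) - P) * P = 0 := by
      rw [Matrix.sub_mul, Matrix.one_mul, hidem, sub_self]
    rw [h2, hz, Matrix.mul_zero, Matrix.trace_zero]
  calc Matrix.trace ((M * P)ᵀ * (M * P))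
      ≤ Matrix.trace ((M * P)ᵀ * (M * P))
          + Matrix.trace ((M * (1 - P))ᵀ * (M * (1 - P))) := by
        linarith [trace_self_nonneg (M * (1 - P))]
    _ = Matrix.trace (Mᵀ * M) := by
        rw [← pyth _ _ hortho, ← hdecomp]

lemma contract_left [DecidableEq m] (M : Matrix m n ℝ) (P : Matrix m m ℝ)
    (hsym : Pᵀ = P) (hidem : P * P = P) :
    Matrix.trace ((P * M)ᵀ * (P * M)) ≤ Matrix.trace (Mᵀ * M) := by
  have h1 : Matrix.trace ((P * M)ᵀ * (P * M)) = Matrix.trace ((Mᵀ * P)ᵀ * (Mᵀ * P)) := by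
    rw [Matrix.transpose_mul, Matrix.transpose_mul, Matrix.transpose_transpose, hsym,
      Matrix.trace_mul_comm]
  have h2 : Matrix.trace (Mᵀ * M) = Matrix.trace (Mᵀᵀ * Mᵀ) := by
    rw [Matrix.transpose_transpose, Matrix.trace_mul_comm]
  rw [h1, h2]
  exact contract_right Mᵀ P hsym hidem

end Aux

/-- Pythagorean-type bound (Eq. (10) of the paper, three-mode case via the mode-1
matricization): the error of a simultaneous three-mode orthogonal projection is at most
the sum of the single-mode projection errors. -/
theorem frob_three_mode_projection_bound {I₁ I₂ I₃ : ℕ}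
    (X : Matrix (Fin I₁) (Fin I₂ × Fin I₃) ℝ)
    (P₁ : Matrix (Fin I₁) (Fin I₁) ℝ)
    (P₂ : Matrix (Fin I₂) (Fin I₂) ℝ)
    (P₃ : Matrix (Fin I₃) (Fin I₃) ℝ)
    (hP₁sym : P₁ᵀ = P₁) (hP₁idem : P₁ * P₁ = P₁)
    (hP₂sym : P₂ᵀ = P₂) (hP₂idem : P₂ * P₂ = P₂)
    (hP₃sym : P₃ᵀ = P₃) (hP₃idem : P₃ * P₃ = P₃) :
    frobNorm (X - P₁ * X * (P₂ ⊗ₖ P₃)) ^ 2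
      ≤ frobNorm (X - P₁ * X) ^ 2
        + frobNorm (X - X * (P₂ ⊗ₖ (1 : Matrix (Fin I₃) (Fin I₃) ℝ))) ^ 2
        + frobNorm (X - X * ((1 : Matrix (Fin I₂) (Fin I₂) ℝ) ⊗ₖ P₃)) ^ 2 := by
  set A : Matrix (Fin I₂ × Fin I₃) (Fin I₂ × Fin I₃) ℝ :=
    P₂ ⊗ₖ (1 : Matrix (Fin I₃) (Fin I₃) ℝ) with hA
  set B : Matrix (Fin I₂ × Fin I₃) (Fin I₂ × Fin I₃) ℝ :=
    (1 : Matrix (Fin I₂) (Fin I₂) ℝ) ⊗ₖ P₃ with hB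
  set Q : Matrix (Fin I₂ × Fin I₃) (Fin I₂ × Fin I₃) ℝ := P₂ ⊗ₖ P₃ with hQ
  have hAB : A * B = Q := by
    rw [hA, hB, hQ, ← Matrix.mul_kronecker_mul, Matrix.mul_one, Matrix.one_mul]
  have hBA : B * A = Q := by
    rw [hA, hB, hQ, ← Matrix.mul_kronecker_mul, Matrix.mul_one, Matrix.one_mul]
  have hAsym : Aᵀ = A := by
    rw [hA, ← Matrix.kroneckerMap_transpose, hP₂sym, Matrix.transpose_one]
  have hAidem : A * A = A := by
    rw [hA, ← Matrix.mul_kronecker_mul, Matrix.mul_one, hP₂idem]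
  have hAQ : A * Q = Q := by
    rw [← hAB, ← Matrix.mul_assoc, hAidem]
  -- rewrite all frobNorm² as traces
  rw [frobNorm_sq, frobNorm_sq, frobNorm_sq, frobNorm_sq]
  -- Step 1: split off the mode-1 projection
  have hsplit1 : X - P₁ * X * Q = (X - P₁ * X) + P₁ * (X - X * Q) := by
    simp only [Matrix.mul_sub, Matrix.mul_assoc]; abel
  have hortho1 : Matrix.trace ((X - P₁ * X)ᵀ * (P₁ * (X - X * Q))) = 0 := by
    have h1 : (X - P₁ * X)ᵀ * (P₁ * (X - X * Q))
        = Xᵀ * (((1 - P₁) * P₁) * (X - X * Q)) := by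
      rw [Matrix.transpose_sub, Matrix.transpose_mul, hP₁sym]
      simp only [Matrix.sub_mul, Matrix.mul_sub, Matrix.one_mul, Matrix.mul_assoc]
    have hz : ((1 : Matrix (Fin I₁) (Fin I₁) ℝ) - P₁) * P₁ = 0 := by
      rw [Matrix.sub_mul, Matrix.one_mul, hP₁idem, sub_self]
    rw [h1, hz, Matrix.zero_mul, Matrix.mul_zero, Matrix.trace_zero]
  have step1 : Matrix.trace ((X - P₁ * X * Q)ᵀ * (X - P₁ * X * Q))
      = Matrix.trace ((X - P₁ * X)ᵀ * (X - P₁ * X))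
        + Matrix.trace ((P₁ * (X - X * Q))ᵀ * (P₁ * (X - X * Q))) := by
    rw [hsplit1]; exact pyth _ _ hortho1
  have step1' : Matrix.trace ((P₁ * (X - X * Q))ᵀ * (P₁ * (X - X * Q)))
      ≤ Matrix.trace ((X - X * Q)ᵀ * (X - X * Q)) :=
    contract_left _ _ hP₁sym hP₁idem
  -- Step 2: split X - X*Q into the two single-mode parts
  have hsplit2 : X - X * Q = (X - X * A) + (X * A) * (1 - B) := by
    simp only [← hAB, Matrix.mul_sub, Matrix.mul_one, Matrix.mul_assoc]; abel
  have hz2 : A * ((1 - B) * (1 - A)) = 0 := by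
    have hexp : A * ((1 - B) * (1 - A)) = A - A * A - A * B + A * (B * A) := by
      noncomm_ring
    rw [hexp, hAidem, hBA, hAB, hAQ]; abel
  have hortho2 : Matrix.trace ((X - X * A)ᵀ * ((X * A) * (1 - B))) = 0 := by
    have h1 : (X - X * A)ᵀ * ((X * A) * (1 - B))
        = (1 - A) * (Xᵀ * X * (A * (1 - B))) := by
      rw [Matrix.transpose_sub, Matrix.transpose_mul, hAsym]
      simp only [Matrix.sub_mul, Matrix.mul_sub, Matrix.one_mul, Matrix.mul_one,
        Matrix.mul_assoc]
    rw [h1, Matrix.trace_mul_comm]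
    have h2 : Xᵀ * X * (A * (1 - B)) * (1 - A) = Xᵀ * X * (A * ((1 - B) * (1 - A))) := by
      simp only [Matrix.mul_assoc]
    rw [h2, hz2, Matrix.mul_zero, Matrix.trace_zero]
  have step2 : Matrix.trace ((X - X * Q)ᵀ * (X - X * Q))
      = Matrix.trace ((X - X * A)ᵀ * (X - X * A))
        + Matrix.trace (((X * A) * (1 - B))ᵀ * ((X * A) * (1 - B))) := by
    rw [hsplit2]; exact pyth _ _ hortho2
  -- Step 3: contract the remaining factor
  have hcomm : (X * A) * (1 - B) = (X * (1 - B)) * A := by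
    have h : A * (1 - B) = (1 - B) * A := by
      rw [Matrix.mul_sub, Matrix.sub_mul, Matrix.mul_one, Matrix.one_mul, hAB, hBA]
    rw [Matrix.mul_assoc, h, ← Matrix.mul_assoc]
  have step3 : Matrix.trace (((X * A) * (1 - B))ᵀ * ((X * A) * (1 - B)))
      ≤ Matrix.trace ((X * (1 - B))ᵀ * (X * (1 - B))) := by
    rw [hcomm]; exact contract_right _ _ hAsym hAidem
  have hXB : X * (1 - B) = X - X * B := by
    rw [Matrix.mul_sub, Matrix.mul_one]
  rw [hXB] at step3
  linarith
end

section
/- (Corollary of Theorem 2 stated in the paper: (1+ε) quasi-optimality of the sketched approximation.) Let X, X̃ ∈ ℝ^{n×d}, let k be a natural number, and let α ≥ 0 with ‖X − X̃‖_F ≤ α. Suppose X_k is a best rank-k approximation of X with β = ‖X − X_k‖_F > 0, and X̃_k is a best rank-k approximation of X̃. If ε ≥ 0 satisfies sqrt(1+ε) − 1 = 2α/β, then ‖X − X̃_k‖_F² ≤ (1+ε)·‖X − X_k‖_F²; in particular, an accurate sketch (α ≈ 0) yields a (1+ε) quasi-optimal rank-k approximation with ε small. -/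
open Matrix

section aux
attribute [local instance] Matrix.frobeniusSeminormedAddCommGroup

lemma frobNorm_eq_norm {m n : Type*} [Fintype m] [Fintype n]
    (A : Matrix m n ℝ) : frobNorm A = ‖A‖ := by
  rw [Matrix.frobenius_norm_def, frobNorm, Real.sqrt_eq_rpow]
  congr 1
  refine Finset.sum_congr rfl fun i _ => Finset.sum_congr rfl fun j _ => ?_
  rw [Real.norm_eq_abs, show ((2:ℝ)) = ((2:ℕ):ℝ) by norm_num, Real.rpow_natCast, sq_abs]

lemma frobNorm_nonneg {m n : Type*} [Fintype m] [Fintype n]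
    (A : Matrix m n ℝ) : 0 ≤ frobNorm A :=
  Real.sqrt_nonneg _

lemma frobNorm_triangle {m n : Type*} [Fintype m] [Fintype n]
    (A B : Matrix m n ℝ) : frobNorm (A + B) ≤ frobNorm A + frobNorm B := by
  simp only [frobNorm_eq_norm]
  exact norm_add_le _ _

lemma frobNorm_neg {m n : Type*} [Fintype m] [Fintype n]
    (A : Matrix m n ℝ) : frobNorm (-A) = frobNorm A := by
  simp only [frobNorm_eq_norm]; exact norm_neg _

end aux

/-- Corollary of Theorem 2 of the paper: the sketched best rank-`k` approximation is
`(1+ε)` quasi-optimal, where `sqrt (1+ε) − 1 = 2α/β`. -/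
theorem sketched_LRA_quasi_optimal {n d : ℕ} (k : ℕ)
    (X Xt : Matrix (Fin n) (Fin d) ℝ)
    (α : ℝ) (hα : 0 ≤ α) (hsketch : frobNorm (X - Xt) ≤ α)
    (Xk : Matrix (Fin n) (Fin d) ℝ)
    (hXk_rank : Xk.rank ≤ k)
    (hXk_best : ∀ Z : Matrix (Fin n) (Fin d) ℝ, Z.rank ≤ k →
      frobNorm (X - Xk) ≤ frobNorm (X - Z))
    (β : ℝ) (hβ : β = frobNorm (X - Xk)) (hβpos : 0 < β)
    (Xtk : Matrix (Fin n) (Fin d) ℝ)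
    (hXtk_rank : Xtk.rank ≤ k)
    (hXtk_best : ∀ Z : Matrix (Fin n) (Fin d) ℝ, Z.rank ≤ k →
      frobNorm (Xt - Xtk) ≤ frobNorm (Xt - Z))
    (ε : ℝ) (hε : 0 ≤ ε) (hεeq : Real.sqrt (1 + ε) - 1 = 2 * α / β) :
    frobNorm (X - Xtk) ^ 2 ≤ (1 + ε) * frobNorm (X - Xk) ^ 2 := by
  have hXtX : frobNorm (Xt - X) ≤ α := by
    have h0 : Xt - X = -(X - Xt) := by abel
    rw [h0, frobNorm_neg]; exact hsketch
  -- step 1: ‖X - Xtk‖ ≤ α + ‖Xt - Xtk‖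
  have h1 : frobNorm (X - Xtk) ≤ α + frobNorm (Xt - Xtk) := by
    have := frobNorm_triangle (X - Xt) (Xt - Xtk)
    have heq : (X - Xt) + (Xt - Xtk) = X - Xtk := by abel
    rw [heq] at this
    linarith
  -- step 2: ‖Xt - Xtk‖ ≤ ‖Xt - Xk‖ ≤ α + β
  have h2 : frobNorm (Xt - Xtk) ≤ α + β := by
    have hb := hXtk_best Xk hXk_rank
    have := frobNorm_triangle (Xt - X) (X - Xk)
    have heq : (Xt - X) + (X - Xk) = Xt - Xk := by abel
    rw [heq] at this
    rw [hβ]; linarith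
  have hle : frobNorm (X - Xtk) ≤ 2 * α + β := by linarith
  have hsqrt : Real.sqrt (1 + ε) = (2 * α + β) / β := by
    field_simp at hεeq ⊢
    linarith
  have hsq : (1 + ε) = ((2 * α + β) / β) ^ 2 := by
    rw [← hsqrt, Real.sq_sqrt (by linarith)]
  have hN : 0 ≤ frobNorm (X - Xtk) := frobNorm_nonneg _
  have h3 : frobNorm (X - Xtk) ^ 2 ≤ (2 * α + β) ^ 2 :=
    pow_le_pow_left₀ hN hle 2
  rw [← hβ, hsq, div_pow]
  rw [div_mul_cancel₀ _ (by positivity : β ^ 2 ≠ 0)]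
  exact h3
end
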